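/- The standard bitableaux Σ = δ_1⋯δ_w with |δ_1| ≥ t form a K-basis of the determinantal ideal I_t. -/

import Mathlib

open MvPolynomial

/-- A row of a bitableau: a list of row indices and a list of column indices
(of equal length, strictly increasing), representing a minor of `X`. -/
abbrev Brow (m n : ℕ) := List (Fin m) × List (Fin n)

/-- A bitableau: a list of rows (i.e. a product of minors). -/
abbrev Bitab (m n : ℕ) := List (Brow m n)

/-- A row represents an honest (nonempty) minor. -/
def validRow {m n : ℕ} (p : Brow m n) : Prop :=
  p.1.length = p.2.length ∧ p.1.Chain' (· < ·) ∧ p.2.Chain' (· < ·) ∧ p.1 ≠ []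

/-- A valid bitableau: all rows are minors, of weakly decreasing sizes. -/
def validB {m n : ℕ} (Δ : Bitab m n) : Prop :=
  (∀ p ∈ Δ, validRow p) ∧ (Δ.map (fun p => p.1.length)).Chain' (· ≥ ·)

/-- The straightening partial order on minors:
`δ ⪯ ε` iff `|ε| ≤ |δ|` and the indices of `δ` are entrywise `≤` those of `ε`. -/
def precRow {m n : ℕ} (p q : Brow m n) : Prop :=
  ∃ (h1 : q.1.length ≤ p.1.length) (h2 : q.2.length ≤ p.2.length),
    (∀ i : Fin q.1.length, p.1.get ⟨i, lt_of_lt_of_le i.isLt h1⟩ ≤ q.1.get i) ∧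
    (∀ i : Fin q.2.length, p.2.get ⟨i, lt_of_lt_of_le i.isLt h2⟩ ≤ q.2.get i)

/-- A standard bitableau: valid, with `δ_1 ⪯ δ_2 ⪯ …`. -/
def isStd {m n : ℕ} (Δ : Bitab m n) : Prop :=
  validB Δ ∧ Δ.Chain' precRow

variable (K : Type*) [Field K]

/-- The minor of the generic matrix `X` given by a row of a bitableau. -/
noncomputable def rowPoly {m n : ℕ} (p : Brow m n) : MvPolynomial (Fin m × Fin n) K :=
  if h : p.1.length = p.2.length then
    (Matrix.of fun i j : Fin p.1.length =>
      (X (p.1.get i, p.2.get (Fin.cast h j)) : MvPolynomial (Fin m × Fin n) K)).det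
  else 0

/-- The product of minors represented by a bitableau. -/
noncomputable def bitabPoly {m n : ℕ} (Δ : Bitab m n) : MvPolynomial (Fin m × Fin n) K :=
  (Δ.map (rowPoly K)).prod

/-- The main-diagonal monomial of a minor. -/
noncomputable def rowDiag {m n : ℕ} (p : Brow m n) : MvPolynomial (Fin m × Fin n) K :=
  if h : p.1.length = p.2.length then
    ∏ i : Fin p.1.length, (X (p.1.get i, p.2.get (Fin.cast h i)) : MvPolynomial (Fin m × Fin n) K)
  else 0

/-- The initial monomial (w.r.t. a diagonal term order) of a bitableau:
the product of the diagonal monomials of its minors. -/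
noncomputable def iniB {m n : ℕ} (Δ : Bitab m n) : MvPolynomial (Fin m × Fin n) K :=
  (Δ.map (rowDiag K)).prod

/-- `γ_t` of a bitableau: `Σ_i (|δ_i| − t + 1)_+`. -/
def gamB {m n : ℕ} (t : ℕ) (Δ : Bitab m n) : ℕ :=
  (Δ.map (fun p => p.1.length + 1 - t)).sum

/-- `α_k` of a bitableau: the sum of the sizes of the first `k` minors. -/
def alB {m n : ℕ} (k : ℕ) (Δ : Bitab m n) : ℕ :=
  ((Δ.map (fun p => p.1.length)).take k).sum

/-- RSK pair insertion: insert the column index `b` into the right tableau by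
bumping, recording the row index `a` in the left tableau at the final box. -/
def pIns {m n : ℕ} : Bitab m n → Fin m → Fin n → Bitab m n
  | [], a, b => [([a], [b])]
  | (s, r) :: rest, a, b =>
    match r.findIdx? (fun z => decide (b < z)) with
    | none => (s ++ [a], r ++ [b]) :: rest
    | some i => (s, r.set i b) :: pIns rest a (r.getD i b)

/-- The two-row array of a monomial exponent: its variables (with multiplicity)
ordered with non-decreasing row indices and, within equal row indices,
non-increasing column indices. -/
noncomputable def monPairs {m n : ℕ} (d : (Fin m × Fin n) →₀ ℕ) : List (Fin m × Fin n) :=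
  d.toMultiset.toList.mergeSort
    (fun p q => decide (p.1 < q.1 ∨ (p.1 = q.1 ∧ q.2 ≤ p.2)))

/-- The inverse KRS map: the standard bitableau obtained from a monomial by RSK
insertion of its two-row array. -/
noncomputable def krsInv {m n : ℕ} (d : (Fin m × Fin n) →₀ ℕ) : Bitab m n :=
  (monPairs d).foldl (fun T p => pIns T p.1 p.2) []

open scoped Classical in
/-- The KRS image of a standard bitableau: the unique monomial mapping to it
under the inverse KRS map (junk value `0` otherwise). -/
noncomputable def krsMon {m n : ℕ} (Δ : Bitab m n) : MvPolynomial (Fin m × Fin n) K :=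
  if h : ∃ d : (Fin m × Fin n) →₀ ℕ, krsInv d = Δ then monomial h.choose (1 : K) else 0

/-- The image `KRS(I)` of an ideal with a standard basis: the `K`-span of the
KRS images of the standard bitableaux contained in `I`. -/
noncomputable def krsIdeal {m n : ℕ} (I : Ideal (MvPolynomial (Fin m × Fin n) K)) :
    Submodule K (MvPolynomial (Fin m × Fin n) K) :=
  Submodule.span K {g | ∃ Δ : Bitab m n, isStd Δ ∧ bitabPoly K Δ ∈ I ∧ g = krsMon K Δ}

/-- `I` has a standard basis: it is spanned over `K` by the standard bitableaux
it contains. -/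
def hasStdBasis {m n : ℕ} (I : Ideal (MvPolynomial (Fin m × Fin n) K)) : Prop :=
  (I : Set (MvPolynomial (Fin m × Fin n) K)) =
    ↑(Submodule.span K {f | ∃ Δ : Bitab m n, isStd Δ ∧ bitabPoly K Δ = f ∧ f ∈ I})

/-- The leading exponent of a polynomial w.r.t. a monomial order. -/
noncomputable def ordDeg {σ : Type*} (ord : MonomialOrder σ)
    (f : MvPolynomial σ K) : σ →₀ ℕ :=
  ord.toSyn.symm (f.support.sup (fun d => ord.toSyn d))

/-- The initial ideal of an ideal w.r.t. a monomial order. -/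
noncomputable def iniIdeal {σ : Type*} (ord : MonomialOrder σ)
    (J : Ideal (MvPolynomial σ K)) : Ideal (MvPolynomial σ K) :=
  Ideal.span {g | ∃ f ∈ J, f ≠ 0 ∧ g = monomial (ordDeg K ord f) (1 : K)}

/-- A monomial order on the variables of `X` is diagonal if the leading
monomial of every minor is its main-diagonal monomial. -/
def isDiagOrder {m n : ℕ} (ord : MonomialOrder (Fin m × Fin n)) : Prop :=
  ∀ p : Brow m n, validRow p →
    (monomial (ordDeg K ord (rowPoly K p)) (1 : K)) = rowDiag K p

namespace ItAux
open Finsupp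

/-- Variable type for the generic rank-`r` specialization `X = Y * Z`:
`Y` is `m × r`, `Z` is `r × n`; ordered lexicographically. -/
abbrev VT (m n r : ℕ) := (Fin m ×ₗ Fin r) ⊕ₗ (Fin r ×ₗ Fin n)

variable {m n r : ℕ}

def yv (a : Fin m) (k : Fin r) : VT m n r := toLex (Sum.inl (toLex (a, k)))
def zv (k : Fin r) (b : Fin n) : VT m n r := toLex (Sum.inr (toLex (k, b)))

theorem yv_eq_iff {a a' : Fin m} {k k' : Fin r} :
    (yv a k : VT m n r) = yv a' k' ↔ a = a' ∧ k = k' := by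
  simp [yv, Prod.ext_iff]

theorem zv_eq_iff {b b' : Fin n} {k k' : Fin r} :
    (zv k b : VT m n r) = zv k' b' ↔ k = k' ∧ b = b' := by
  simp [zv, Prod.ext_iff]

theorem yv_ne_zv {a : Fin m} {k k' : Fin r} {b : Fin n} :
    (yv a k : VT m n r) ≠ zv k' b := by simp [yv, zv]

theorem yv_lt_yv_iff {a a' : Fin m} {k k' : Fin r} :
    (yv a k : VT m n r) < yv a' k' ↔ a < a' ∨ (a = a' ∧ k < k') := by
  rw [yv, yv, Sum.Lex.inl_lt_inl_iff, Prod.Lex.lt_iff]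
  exact Iff.rfl

theorem zv_lt_zv_iff {b b' : Fin n} {k k' : Fin r} :
    (zv k b : VT m n r) < zv k' b' ↔ k < k' ∨ (k = k' ∧ b < b') := by
  rw [zv, zv, Sum.Lex.inr_lt_inr_iff, Prod.Lex.lt_iff]
  exact Iff.rfl

theorem yv_lt_zv {a : Fin m} {k k' : Fin r} {b : Fin n} :
    (yv a k : VT m n r) < zv k' b := Sum.Lex.inl_lt_inr _ _

theorem not_zv_lt_yv {a : Fin m} {k k' : Fin r} {b : Fin n} :
    ¬ (zv k' b : VT m n r) < yv a k := Sum.Lex.not_inr_lt_inl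

/-- Case split for variables. -/
theorem vt_cases (u : VT m n r) : (∃ a k, u = yv a k) ∨ (∃ k b, u = zv k b) := by
  rcases u with x | x
  · exact Or.inl ⟨x.1, x.2, rfl⟩
  · exact Or.inr ⟨x.1, x.2, rfl⟩

/-! ### Exponents of monomials occurring in the expansion of a specialized minor -/

/-- The exponent of the monomial `∏ i Y_{av i, f i} ∏ i Z_{g i, bv i}`. -/
noncomputable def dexp {s : ℕ} (av : Fin s → Fin m) (bv : Fin s → Fin n)
    (f g : Fin s → Fin r) : VT m n r →₀ ℕ :=
  (∑ i, Finsupp.single (yv (av i) (f i)) 1) + (∑ i, Finsupp.single (zv (g i) (bv i)) 1)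

theorem dexp_apply_y {s : ℕ} (av : Fin s → Fin m) (bv : Fin s → Fin n)
    (f g : Fin s → Fin r) (c : Fin m) (l : Fin r) :
    dexp av bv f g (yv c l)
      = ∑ i : Fin s, (if av i = c ∧ f i = l then 1 else 0) := by
  classical
  simp only [dexp, Finsupp.add_apply, Finsupp.finset_sum_apply, Finsupp.single_apply]
  have h2 : ∀ i : Fin s, (if zv (g i) (bv i) = yv c l then (1:ℕ) else 0) = 0 :=
    fun i => if_neg (fun h => yv_ne_zv h.symm)
  simp only [h2, Finset.sum_const_zero, add_zero]
  refine Finset.sum_congr rfl fun i _ => if_congr yv_eq_iff rfl rfl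

theorem dexp_apply_z {s : ℕ} (av : Fin s → Fin m) (bv : Fin s → Fin n)
    (f g : Fin s → Fin r) (k : Fin r) (c : Fin n) :
    dexp av bv f g (zv k c)
      = ∑ i : Fin s, (if g i = k ∧ bv i = c then 1 else 0) := by
  classical
  simp only [dexp, Finsupp.add_apply, Finsupp.finset_sum_apply, Finsupp.single_apply]
  have h2 : ∀ i : Fin s, (if yv (av i) (f i) = zv k c then (1:ℕ) else 0) = 0 :=
    fun i => if_neg (fun h => yv_ne_zv h)
  simp only [h2, Finset.sum_const_zero, zero_add]
  refine Finset.sum_congr rfl fun i _ => if_congr zv_eq_iff rfl rfl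

/-- The first place where an injective `f` differs from the inclusion jumps up. -/
theorem firstDiff {s : ℕ} (hsr : s ≤ r) (f : Fin s → Fin r)
    (hf : Function.Injective f) (hne : f ≠ fun i => Fin.castLE hsr i) :
    ∃ i₀ : Fin s, f i₀ ≠ Fin.castLE hsr i₀ ∧
      (∀ j : Fin s, j < i₀ → f j = Fin.castLE hsr j) ∧ (i₀ : ℕ) < (f i₀ : ℕ) := by
  classical
  have hT : (Finset.univ.filter (fun i : Fin s => f i ≠ Fin.castLE hsr i)).Nonempty := by
    by_contra h
    rw [Finset.not_nonempty_iff_eq_empty, Finset.filter_eq_empty_iff] at h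
    exact hne (funext fun i => not_not.mp (h (Finset.mem_univ i)))
  obtain ⟨i₀, hi₀mem, hi₀min⟩ :
      ∃ i₀ ∈ Finset.univ.filter (fun i : Fin s => f i ≠ Fin.castLE hsr i),
        ∀ j ∈ Finset.univ.filter (fun i : Fin s => f i ≠ Fin.castLE hsr i), i₀ ≤ j :=
    ⟨_, Finset.min'_mem _ hT, fun j hj => Finset.min'_le _ j hj⟩
  have hne₀ : f i₀ ≠ Fin.castLE hsr i₀ := (Finset.mem_filter.mp hi₀mem).2
  have hmin : ∀ j : Fin s, f j ≠ Fin.castLE hsr j → i₀ ≤ j :=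
    fun j hj => hi₀min j (Finset.mem_filter.mpr ⟨Finset.mem_univ _, hj⟩)
  have hbelow : ∀ j : Fin s, j < i₀ → f j = Fin.castLE hsr j := by
    intro j hj
    by_contra hcon
    exact absurd hj (not_lt.mpr (hmin j hcon))
  refine ⟨i₀, hne₀, hbelow, ?_⟩
  rcases lt_trichotomy ((f i₀ : ℕ)) (i₀ : ℕ) with h | h | h
  · exfalso
    have hjs : (f i₀ : ℕ) < s := lt_trans h i₀.isLt
    have hjlt : (⟨(f i₀ : ℕ), hjs⟩ : Fin s) < i₀ := h
    have h1 : f ⟨(f i₀ : ℕ), hjs⟩ = Fin.castLE hsr ⟨(f i₀ : ℕ), hjs⟩ := hbelow _ hjlt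
    have h2 : f ⟨(f i₀ : ℕ), hjs⟩ = f i₀ := by
      rw [h1]; exact Fin.ext (by simp)
    have h3 := hf h2
    rw [h3] at hjlt
    exact lt_irrefl _ hjlt
  · exact absurd (Fin.ext (by simp [h.symm] :
      ((f i₀ : Fin r) : ℕ) = ((Fin.castLE hsr i₀ : Fin r) : ℕ))) hne₀
  · exact h

/-- Strict lex comparison when the `Y`-part is not the diagonal one. -/
theorem dexp_lt_left {s : ℕ} (hsr : s ≤ r) (av : Fin s → Fin m) (hav : StrictMono av)
    (bv bv' : Fin s → Fin n) (g g' : Fin s → Fin r) (f : Fin s → Fin r)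
    (hf : Function.Injective f) (hne : f ≠ fun i => Fin.castLE hsr i) :
    toLex (dexp av bv f g) < toLex (dexp av bv' (fun i => Fin.castLE hsr i) g') := by
  classical
  obtain ⟨i₀, hi0ne, hbelow, hgt⟩ := firstDiff hsr f hf hne
  refine ⟨yv (av i₀) (Fin.castLE hsr i₀), fun u hu => ?_, ?_⟩
  · simp only [ofLex_toLex]
    rcases vt_cases u with ⟨c, l, rfl⟩ | ⟨k, c, rfl⟩
    · rw [yv_lt_yv_iff] at hu
      rw [dexp_apply_y, dexp_apply_y]
      refine Finset.sum_congr rfl fun i _ => if_congr ?_ rfl rfl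
      rcases hu with hc | ⟨hc, hl⟩
      · constructor
        · rintro ⟨h1, h2⟩
          exact ⟨h1, by rw [← h2]; exact (hbelow i (hav.lt_iff_lt.mp (h1 ▸ hc))).symm⟩
        · rintro ⟨h1, h2⟩
          exact ⟨h1, by rw [← h2]; exact hbelow i (hav.lt_iff_lt.mp (h1 ▸ hc))⟩
      · subst hc
        constructor
        · rintro ⟨h1, h2⟩
          exfalso
          have hii : i = i₀ := hav.injective h1
          subst hii
          have hl' : (l : ℕ) < (i : ℕ) := by exact hl
          have h2' : ((f i : Fin r) : ℕ) = (l : ℕ) := by rw [h2]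
          omega
        · rintro ⟨h1, h2⟩
          exfalso
          have hii : i = i₀ := hav.injective h1
          subst hii
          have hl' : (l : ℕ) < (i : ℕ) := by exact hl
          have h2' : (i : ℕ) = (l : ℕ) := by rw [← h2]; simp
          omega
    · exact absurd hu not_zv_lt_yv
  · simp only [ofLex_toLex]
    rw [dexp_apply_y, dexp_apply_y]
    have h0 : (∑ i : Fin s, (if av i = av i₀ ∧ f i = Fin.castLE hsr i₀ then 1 else 0)) = 0 := by
      refine Finset.sum_eq_zero fun i _ => ?_
      rw [if_neg]
      rintro ⟨h1, h2⟩
      exact hi0ne ((hav.injective h1) ▸ h2)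
    have h1 : (∑ i : Fin s, (if av i = av i₀ ∧ (Fin.castLE hsr i : Fin r) = Fin.castLE hsr i₀ then 1 else 0)) = 1 := by
      rw [Finset.sum_congr rfl (fun i _ => if_congr
        ⟨fun h => hav.injective h.1, fun h => by subst h; exact ⟨rfl, rfl⟩⟩ rfl rfl)]
      simp
    rw [h0, h1]
    exact Nat.zero_lt_one

/-- Strict lex comparison when the `Y`-part is diagonal but the `Z`-part is not. -/
theorem dexp_lt_right {s : ℕ} (hsr : s ≤ r) (av : Fin s → Fin m)
    (bv : Fin s → Fin n) (hbv : StrictMono bv) (g : Fin s → Fin r)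
    (hg : Function.Injective g) (hne : g ≠ fun i => Fin.castLE hsr i) :
    toLex (dexp av bv (fun i => Fin.castLE hsr i) g)
      < toLex (dexp av bv (fun i => Fin.castLE hsr i) (fun i => Fin.castLE hsr i)) := by
  classical
  obtain ⟨i₀, hi0ne, hbelow, hgt⟩ := firstDiff hsr g hg hne
  refine ⟨zv (Fin.castLE hsr i₀) (bv i₀), fun u hu => ?_, ?_⟩
  · simp only [ofLex_toLex]
    rcases vt_cases u with ⟨c, l, rfl⟩ | ⟨k, c, rfl⟩
    · rw [dexp_apply_y, dexp_apply_y]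
    · rw [zv_lt_zv_iff] at hu
      rw [dexp_apply_z, dexp_apply_z]
      refine Finset.sum_congr rfl fun i _ => if_congr ?_ rfl rfl
      rcases hu with hk | ⟨hk, hc⟩
      · have hki : (k : ℕ) < (i₀ : ℕ) := by exact hk
        have hks : (k : ℕ) < s := by have := i₀.isLt; omega
        have hjlt : (⟨(k : ℕ), hks⟩ : Fin s) < i₀ := hki
        have hgj : g ⟨(k : ℕ), hks⟩ = k := by
          rw [hbelow _ hjlt]; exact Fin.ext (by simp)
        constructor
        · rintro ⟨h1, h2⟩
          have hij : i = ⟨(k : ℕ), hks⟩ := hg (h1.trans hgj.symm)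
          subst hij
          exact ⟨Fin.ext (by simp), h2⟩
        · rintro ⟨h1, h2⟩
          have hik : (i : ℕ) = (k : ℕ) := by rw [← h1]; simp
          have hij : i = ⟨(k : ℕ), hks⟩ := Fin.ext (by simp [hik])
          subst hij
          exact ⟨hgj, h2⟩
      · subst hk
        constructor
        · rintro ⟨h1, h2⟩
          exfalso
          rcases lt_trichotomy i i₀ with hlt | heq | hgt2
          · rw [hbelow i hlt] at h1
            have : i = i₀ := Fin.ext (by
              have := congrArg (fun x : Fin r => (x : ℕ)) h1
              simpa using this)
            rw [this] at hlt
            exact lt_irrefl _ hlt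
          · exact hi0ne (heq ▸ h1)
          · have hbb : bv i₀ < bv i := hbv hgt2
            rw [h2] at hbb
            exact absurd hc (not_lt.mpr hbb.le)
        · rintro ⟨h1, h2⟩
          exfalso
          have : i = i₀ := Fin.ext (by
            have := congrArg (fun x : Fin r => (x : ℕ)) h1
            simpa using this)
          subst this
          rw [h2] at hc
          exact lt_irrefl _ hc
  · simp only [ofLex_toLex]
    rw [dexp_apply_z, dexp_apply_z]
    have h0 : (∑ i : Fin s, (if g i = Fin.castLE hsr i₀ ∧ bv i = bv i₀ then 1 else 0)) = 0 := by
      refine Finset.sum_eq_zero fun i _ => ?_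
      rw [if_neg]
      rintro ⟨h1, h2⟩
      exact hi0ne ((hbv.injective h2) ▸ h1)
    have h1 : (∑ i : Fin s, (if (Fin.castLE hsr i : Fin r) = Fin.castLE hsr i₀ ∧ bv i = bv i₀ then 1 else 0)) = 1 := by
      rw [Finset.sum_congr rfl (fun i _ => if_congr
        ⟨fun h => hbv.injective h.2, fun h => by subst h; exact ⟨rfl, rfl⟩⟩ rfl rfl)]
      simp
    rw [h0, h1]
    exact Nat.zero_lt_one


/-! ### Generic leading-monomial lemmas -/

open MvPolynomial in
theorem prod_X_eq_monomial {σ R : Type*} [CommSemiring R] {ι : Type*} (t : Finset ι) (v : ι → σ) :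
    (∏ i ∈ t, (X (v i) : MvPolynomial σ R))
      = monomial (∑ i ∈ t, Finsupp.single (v i) 1) 1 := by
  classical
  induction t using Finset.cons_induction with
  | empty => simp
  | cons a t ha ih =>
      rw [Finset.prod_cons, Finset.sum_cons, ih, X, monomial_mul, one_mul]

open MvPolynomial in
theorem coeff_mul_top {σ K : Type*} [Field K] [LinearOrder σ] (p q : MvPolynomial σ K)
    (a b : σ →₀ ℕ)
    (hpa : coeff a p = 1) (hps : ∀ d ∈ p.support, toLex d ≤ toLex a)
    (hqb : coeff b q = 1) (hqs : ∀ d ∈ q.support, toLex d ≤ toLex b) :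
    coeff (a + b) (p * q) = 1 ∧ ∀ d ∈ (p * q).support, toLex d ≤ toLex (a + b) := by
  classical
  constructor
  · rw [coeff_mul, Finset.sum_eq_single_of_mem (a, b) (Finset.HasAntidiagonal.mem_antidiagonal.mpr rfl)]
    · rw [hpa, hqb, one_mul]
    · rintro ⟨u, v⟩ hmem hne
      rw [Finset.HasAntidiagonal.mem_antidiagonal] at hmem
      by_contra hcon
      have hu : u ∈ p.support := by
        rw [MvPolynomial.mem_support_iff]; intro h; rw [h, zero_mul] at hcon; exact hcon rfl
      have hv : v ∈ q.support := by
        rw [MvPolynomial.mem_support_iff]; intro h; rw [h, mul_zero] at hcon; exact hcon rfl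
      have hua : toLex u ≤ toLex a := hps u hu
      have hvb : toLex v ≤ toLex b := hqs v hv
      have hsum : toLex u + toLex v = toLex a + toLex b := congrArg toLex hmem
      have huaeq : toLex u = toLex a := by
        rcases lt_or_eq_of_le hua with h | h
        · exfalso
          have := add_lt_add_of_lt_of_le h hvb
          rw [hsum] at this
          exact lt_irrefl _ this
        · exact h
      have hueq : u = a := huaeq
      have hveq : v = b := by
        have : toLex v = toLex b := by
          have := hsum
          rw [huaeq] at this
          exact add_left_cancel this
        exact this
      exact hne (Prod.ext hueq hveq)
  · intro d hd
    have := MvPolynomial.support_mul p q hd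
    rw [Finset.mem_add] at this
    obtain ⟨u, hu, v, hv, rfl⟩ := this
    exact add_le_add (hps u hu) (hqs v hv)

open MvPolynomial in
theorem triangular_linearIndependent {σ K : Type*} [Field K] [LinearOrder σ] {ι : Type*}
    (p : ι → MvPolynomial σ K) (μ : ι → (σ →₀ ℕ)) (hinj : Function.Injective μ)
    (hcoeff : ∀ i, coeff (μ i) (p i) = 1)
    (hsupp : ∀ i, ∀ d ∈ (p i).support, toLex d ≤ toLex (μ i)) :
    LinearIndependent K p := by
  classical
  rw [linearIndependent_iff']
  intro s
  induction s using Finset.strongInduction with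
  | _ s ih =>
    intro g hsum i hi
    rcases Finset.eq_empty_or_nonempty s with rfl | hne
    · exact absurd hi (Finset.notMem_empty i)
    obtain ⟨i₀, hi₀mem, hi₀max⟩ := Finset.exists_max_image s (fun i => toLex (μ i)) hne
    have hg₀ : g i₀ = 0 := by
      have hc := congrArg (coeff (μ i₀)) hsum
      rw [coeff_zero] at hc
      rw [MvPolynomial.coeff_sum] at hc
      rw [Finset.sum_eq_single_of_mem i₀ hi₀mem] at hc
      · rw [MvPolynomial.coeff_smul, hcoeff i₀, smul_eq_mul, mul_one] at hc
        exact hc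
      · intro j hj hjne
        rw [MvPolynomial.coeff_smul]
        have : coeff (μ i₀) (p j) = 0 := by
          by_contra hcon
          have hmem : μ i₀ ∈ (p j).support := MvPolynomial.mem_support_iff.mpr hcon
          have h1 : toLex (μ i₀) ≤ toLex (μ j) := hsupp j _ hmem
          have h2 : toLex (μ j) ≤ toLex (μ i₀) := hi₀max j hj
          have : μ j = μ i₀ := (le_antisymm h2 h1 :)
          exact hjne (hinj this)
        rw [this, smul_zero]
    have hrest : ∑ j ∈ s.erase i₀, g j • p j = 0 := by
      have : ∑ j ∈ s, g j • p j = g i₀ • p i₀ + ∑ j ∈ s.erase i₀, g j • p j :=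
        (Finset.add_sum_erase s _ hi₀mem).symm
      rw [hsum, hg₀, zero_smul, zero_add] at this
      exact this.symm
    rcases eq_or_ne i i₀ with rfl | hne'
    · exact hg₀
    · exact ih (s.erase i₀) (Finset.erase_ssubset hi₀mem) g hrest i
        (Finset.mem_erase.mpr ⟨hne', hi⟩)

theorem det_submatrix_zero_of_not_inj {R : Type*} [CommRing R] {s r' : ℕ}
    (B : Matrix (Fin r') (Fin s) R) (f : Fin s → Fin r')
    (hf : ¬ Function.Injective f) : (B.submatrix f id).det = 0 := by
  rw [Function.not_injective_iff] at hf
  obtain ⟨i, j, hfij, hij⟩ := hf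
  exact Matrix.det_zero_of_row_eq hij (by
    funext k
    simp [Matrix.submatrix, hfij])

theorem det_mul_expansion {R : Type*} [CommRing R] {s r' : ℕ}
    (A : Matrix (Fin s) (Fin r') R) (B : Matrix (Fin r') (Fin s) R) :
    (A * B).det = ∑ f : Fin s → Fin r', (∏ i, A i (f i)) * (B.submatrix f id).det := by
  classical
  have h1 : (A * B) = fun i => ∑ k : Fin r', A i k • B k := by
    funext i j
    simp [Matrix.mul_apply]
  have h2 : (A * B).det
      = (Matrix.detRowAlternating : (Fin s → R) [⋀^Fin s]→ₗ[R] R)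
          (fun i => ∑ k : Fin r', A i k • B k) := by
    rw [← h1]
    rfl
  rw [h2, ← AlternatingMap.coe_multilinearMap]
  rw [(Matrix.detRowAlternating : (Fin s → R) [⋀^Fin s]→ₗ[R] R).toMultilinearMap.map_sum
    (fun i k => A i k • B k)]
  refine Finset.sum_congr rfl fun f _ => ?_
  have := (Matrix.detRowAlternating : (Fin s → R) [⋀^Fin s]→ₗ[R] R).toMultilinearMap.map_smul_univ
    (fun i => A i (f i)) (fun i => B (f i))
  rw [show (fun i => A i (f i) • B (f i)) = fun i => (fun i => A i (f i)) i • (fun i => B (f i)) i from rfl]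
  rw [this, smul_eq_mul]
  rfl


/-! ### The specialization `X ↦ Y * Z` and images of minors -/

open MvPolynomial

noncomputable def phi (K : Type*) [Field K] (m n r : ℕ) :
    MvPolynomial (Fin m × Fin n) K →ₐ[K] MvPolynomial (VT m n r) K :=
  aeval (fun q : Fin m × Fin n => ∑ k : Fin r, X (yv q.1 k) * X (zv k q.2))

/-- The marker (leading) exponent of the image of a minor. -/
noncomputable def rowMark (m n r : ℕ) (p : Brow m n) : VT m n r →₀ ℕ :=
  if hh : p.1.length = p.2.length ∧ p.1.length ≤ r then
    dexp (fun i => p.1.get i) (fun i => p.2.get (Fin.cast hh.1 i))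
      (fun i => Fin.castLE hh.2 i) (fun i => Fin.castLE hh.2 i)
  else 0

theorem phi_rowPoly_expand {K : Type*} [Field K] {m n r : ℕ} (p : Brow m n)
    (h : p.1.length = p.2.length) :
    phi K m n r (rowPoly K p)
      = ∑ f : Fin p.1.length → Fin r,
          (∏ i, (X (yv (p.1.get i) (f i)) : MvPolynomial (VT m n r) K)) *
          ((Matrix.of fun (k : Fin r) (j : Fin p.1.length) =>
              (X (zv k (p.2.get (Fin.cast h j))) : MvPolynomial (VT m n r) K)).submatrix
                f id).det := by
  classical
  rw [rowPoly, dif_pos h, AlgHom.map_det, AlgHom.mapMatrix_apply]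
  have hAB : (Matrix.of fun i j : Fin p.1.length =>
        (X (p.1.get i, p.2.get (Fin.cast h j)) : MvPolynomial (Fin m × Fin n) K)).map
          (phi K m n r)
      = (Matrix.of fun (i : Fin p.1.length) (k : Fin r) =>
          (X (yv (p.1.get i) k) : MvPolynomial (VT m n r) K))
        * (Matrix.of fun (k : Fin r) (j : Fin p.1.length) =>
            (X (zv k (p.2.get (Fin.cast h j))) : MvPolynomial (VT m n r) K)) := by
    ext i j
    simp [phi, Matrix.mul_apply]
  rw [hAB, det_mul_expansion]
  rfl

theorem term_expand {K : Type*} [Field K] {m n r : ℕ} (p : Brow m n)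
    (h : p.1.length = p.2.length) (f : Fin p.1.length → Fin r) :
    (∏ i, (X (yv (p.1.get i) (f i)) : MvPolynomial (VT m n r) K)) *
          ((Matrix.of fun (k : Fin r) (j : Fin p.1.length) =>
              (X (zv k (p.2.get (Fin.cast h j))) : MvPolynomial (VT m n r) K)).submatrix
                f id).det
      = ∑ σ : Equiv.Perm (Fin p.1.length),
          ((Equiv.Perm.sign σ : ℤ)) •
            (monomial (dexp (fun i => p.1.get i) (fun i => p.2.get (Fin.cast h i))
                f (fun i => f (σ i))) (1:K)) := by
  classical
  rw [Matrix.det_apply, Finset.mul_sum]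
  refine Finset.sum_congr rfl fun σ _ => ?_
  rw [Units.smul_def, mul_smul_comm]
  congr 1
  simp only [Matrix.submatrix_apply, Matrix.of_apply, id]
  rw [prod_X_eq_monomial, prod_X_eq_monomial, monomial_mul, one_mul]
  rfl

theorem strictMono_of_chain' {α : Type*} [Preorder α] {l : List α}
    (hc : l.Chain' (· < ·)) : StrictMono (fun i : Fin l.length => l.get i) := by
  intro i j hij
  exact List.pairwise_iff_get.mp (List.isChain_iff_pairwise.mp hc) i j hij

/-- Main per-minor lemma: the image of a small minor under `phi` has leading
(w.r.t. lex) monomial its diagonal marker, with coefficient `1`. -/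
theorem phi_row_main {K : Type*} [Field K] {m n r : ℕ} (p : Brow m n)
    (hvr : validRow p) (hsr : p.1.length ≤ r) :
    MvPolynomial.coeff (rowMark m n r p) (phi K m n r (rowPoly K p)) = 1 ∧
    ∀ d ∈ (phi K m n r (rowPoly K p)).support, toLex d ≤ toLex (rowMark m n r p) := by
  classical
  obtain ⟨h, hca, hcb, hnemp⟩ := hvr
  have havmono : StrictMono (fun i : Fin p.1.length => p.1.get i) := strictMono_of_chain' hca
  have hbvmono : StrictMono (fun i : Fin p.1.length => p.2.get (Fin.cast h i)) := by
    intro i j hij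
    exact strictMono_of_chain' hcb (by simpa using hij :
      (Fin.cast h i) < (Fin.cast h j))
  have hmark : rowMark m n r p
      = dexp (fun i => p.1.get i) (fun i => p.2.get (Fin.cast h i))
          (fun i => Fin.castLE hsr i) (fun i => Fin.castLE hsr i) := by
    rw [rowMark, dif_pos (⟨h, hsr⟩ : p.1.length = p.2.length ∧ p.1.length ≤ r)]
  have hcastinj : Function.Injective (fun i : Fin p.1.length => Fin.castLE hsr i) :=
    fun i j hij => by
      have : (i : ℕ) = (j : ℕ) := by simpa using congrArg (fun x : Fin r => (x : ℕ)) hij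
      exact Fin.ext this
  -- strict bound for non-leading terms
  have hlt : ∀ (f : Fin p.1.length → Fin r) (σ : Equiv.Perm (Fin p.1.length)),
      Function.Injective f → ¬(f = (fun i => Fin.castLE hsr i) ∧ σ = 1) →
      toLex (dexp (fun i => p.1.get i) (fun i => p.2.get (Fin.cast h i)) f (fun i => f (σ i)))
        < toLex (rowMark m n r p) := by
    intro f σ hfinj hne
    rw [hmark]
    by_cases hf : f = (fun i => Fin.castLE hsr i)
    · subst hf
      have hσ : σ ≠ 1 := fun hs => hne ⟨rfl, hs⟩
      have hginj : Function.Injective (fun i : Fin p.1.length => Fin.castLE hsr (σ i)) :=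
        fun i j hij => σ.injective (hcastinj hij)
      have hgne : (fun i : Fin p.1.length => Fin.castLE hsr (σ i))
          ≠ (fun i => Fin.castLE hsr i) := by
        intro hcon
        apply hσ
        ext i
        have h2 : σ i = i := hcastinj (congrFun hcon i)
        simp [h2]
      exact dexp_lt_right hsr _ _ hbvmono _ hginj hgne
    · exact dexp_lt_left hsr _ havmono _ _ _ _ f hfinj hf
  have hle : ∀ (f : Fin p.1.length → Fin r) (σ : Equiv.Perm (Fin p.1.length)),
      Function.Injective f →
      toLex (dexp (fun i => p.1.get i) (fun i => p.2.get (Fin.cast h i)) f (fun i => f (σ i)))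
        ≤ toLex (rowMark m n r p) := by
    intro f σ hfinj
    by_cases hfs : f = (fun i => Fin.castLE hsr i) ∧ σ = 1
    · obtain ⟨hf, hσ⟩ := hfs
      subst hf; subst hσ
      rw [hmark]
      exact le_of_eq (by rfl)
    · exact le_of_lt (hlt f σ hfinj hfs)
  -- vanishing of non-injective terms
  have hzero : ∀ f : Fin p.1.length → Fin r, ¬ Function.Injective f →
      (∏ i, (X (yv (p.1.get i) (f i)) : MvPolynomial (VT m n r) K)) *
          ((Matrix.of fun (k : Fin r) (j : Fin p.1.length) =>
              (X (zv k (p.2.get (Fin.cast h j))) : MvPolynomial (VT m n r) K)).submatrix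
                f id).det = 0 := by
    intro f hf
    rw [det_submatrix_zero_of_not_inj _ _ hf, mul_zero]
  constructor
  · rw [phi_rowPoly_expand p h, MvPolynomial.coeff_sum]
    rw [Finset.sum_eq_single_of_mem (fun i => Fin.castLE hsr i) (Finset.mem_univ _)]
    · rw [term_expand p h, MvPolynomial.coeff_sum]
      rw [Finset.sum_eq_single_of_mem (1 : Equiv.Perm (Fin p.1.length)) (Finset.mem_univ _)]
      · rw [MvPolynomial.coeff_smul, MvPolynomial.coeff_monomial, if_pos, map_one]
        · simp
        · rw [hmark]
          rfl
      · intro σ _ hσ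
        rw [MvPolynomial.coeff_smul, MvPolynomial.coeff_monomial, if_neg, smul_zero]
        intro hcon
        exact absurd (congrArg toLex hcon)
          (ne_of_lt (hlt _ σ hcastinj (fun hh => hσ hh.2)))
    · intro f _ hf
      by_cases hfinj : Function.Injective f
      · rw [term_expand p h, MvPolynomial.coeff_sum]
        refine Finset.sum_eq_zero fun σ _ => ?_
        rw [MvPolynomial.coeff_smul, MvPolynomial.coeff_monomial, if_neg, smul_zero]
        intro hcon
        exact absurd (congrArg toLex hcon)
          (ne_of_lt (hlt f σ hfinj (fun hh => hf hh.1)))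
      · rw [hzero f hfinj, MvPolynomial.coeff_zero]
  · intro d hd
    rw [MvPolynomial.mem_support_iff] at hd
    rw [phi_rowPoly_expand p h, MvPolynomial.coeff_sum] at hd
    obtain ⟨f, _, hf⟩ := Finset.exists_ne_zero_of_sum_ne_zero hd
    by_cases hfinj : Function.Injective f
    · rw [term_expand p h, MvPolynomial.coeff_sum] at hf
      obtain ⟨σ, _, hσ⟩ := Finset.exists_ne_zero_of_sum_ne_zero hf
      rw [MvPolynomial.coeff_smul, MvPolynomial.coeff_monomial] at hσ
      by_cases hdd : dexp (fun i => p.1.get i) (fun i => p.2.get (Fin.cast h i))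
          f (fun i => f (σ i)) = d
      · rw [← hdd]
        exact hle f σ hfinj
      · rw [if_neg hdd, smul_zero] at hσ
        exact absurd rfl hσ
    · rw [hzero f hfinj, MvPolynomial.coeff_zero] at hf
      exact absurd rfl hf

/-- Minors of size `> r` are killed by `phi`. -/
theorem phi_row_zero {K : Type*} [Field K] {m n r : ℕ} (p : Brow m n)
    (h : p.1.length = p.2.length) (hgt : r < p.1.length) :
    phi K m n r (rowPoly K p) = 0 := by
  classical
  rw [phi_rowPoly_expand p h]
  refine Finset.sum_eq_zero fun f _ => ?_
  have : ¬ Function.Injective f := by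
    intro hinj
    have := Fintype.card_le_of_injective f hinj
    simp only [Fintype.card_fin] at this
    omega
  rw [det_submatrix_zero_of_not_inj _ _ this, mul_zero]


/-! ### Markers of bitableaux -/

noncomputable def tabMark (m n r : ℕ) (Δ : Bitab m n) : VT m n r →₀ ℕ :=
  (Δ.map (rowMark m n r)).sum

theorem tabMark_nil {m n r : ℕ} : tabMark m n r [] = 0 := rfl

theorem tabMark_cons {m n r : ℕ} (p : Brow m n) (Δ : Bitab m n) :
    tabMark m n r (p :: Δ) = rowMark m n r p + tabMark m n r Δ := by
  rw [tabMark, List.map_cons, List.sum_cons]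
  rfl

theorem tabMark_apply {m n r : ℕ} (Δ : Bitab m n) (u : VT m n r) :
    tabMark m n r Δ u = (Δ.map (fun p => rowMark m n r p u)).sum := by
  induction Δ with
  | nil => rfl
  | cons p Δ ih => rw [tabMark_cons, Finsupp.add_apply, ih, List.map_cons, List.sum_cons]

theorem rowMark_apply_y {m n r : ℕ} (p : Brow m n)
    (hh : p.1.length = p.2.length ∧ p.1.length ≤ r) (a : Fin m) (k : Fin r) :
    rowMark m n r p (yv a k)
      = if hk : (k : ℕ) < p.1.length then
          (if p.1.get ⟨(k : ℕ), hk⟩ = a then 1 else 0) else 0 := by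
  classical
  rw [rowMark, dif_pos hh, dexp_apply_y]
  by_cases hk : (k : ℕ) < p.1.length
  · rw [dif_pos hk]
    by_cases ha : p.1.get ⟨(k : ℕ), hk⟩ = a
    · rw [if_pos ha]
      have hiff : ∀ i : Fin p.1.length,
          ((p.1.get i = a ∧ Fin.castLE hh.2 i = k) ↔ i = ⟨(k : ℕ), hk⟩) := by
        intro i
        constructor
        · rintro ⟨h1, h2⟩
          have hv : (i : ℕ) = (k : ℕ) := by
            have := congrArg (fun x : Fin r => (x : ℕ)) h2
            simpa using this
          exact Fin.ext hv
        · rintro rfl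
          exact ⟨ha, Fin.ext (by simp)⟩
      rw [Finset.sum_congr rfl (fun i _ => if_congr (hiff i) rfl rfl)]
      simp
    · rw [if_neg ha]
      refine Finset.sum_eq_zero fun i _ => ?_
      rw [if_neg]
      rintro ⟨h1, h2⟩
      have hv : (i : ℕ) = (k : ℕ) := by
        have := congrArg (fun x : Fin r => (x : ℕ)) h2
        simpa using this
      have : i = ⟨(k : ℕ), hk⟩ := Fin.ext hv
      exact ha (this ▸ h1)
  · rw [dif_neg hk]
    refine Finset.sum_eq_zero fun i _ => ?_
    rw [if_neg]
    rintro ⟨h1, h2⟩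
    have hv : (i : ℕ) = (k : ℕ) := by
      have := congrArg (fun x : Fin r => (x : ℕ)) h2
      simpa using this
    exact hk (hv ▸ i.isLt)

theorem rowMark_apply_z {m n r : ℕ} (p : Brow m n)
    (hh : p.1.length = p.2.length ∧ p.1.length ≤ r) (k : Fin r) (b : Fin n) :
    rowMark m n r p (zv k b)
      = if hk : (k : ℕ) < p.2.length then
          (if p.2.get ⟨(k : ℕ), hk⟩ = b then 1 else 0) else 0 := by
  classical
  rw [rowMark, dif_pos hh, dexp_apply_z]
  by_cases hk : (k : ℕ) < p.2.length
  · rw [dif_pos hk]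
    have hk1 : (k : ℕ) < p.1.length := hh.1 ▸ hk
    by_cases hb : p.2.get ⟨(k : ℕ), hk⟩ = b
    · rw [if_pos hb]
      have hiff : ∀ i : Fin p.1.length,
          ((Fin.castLE hh.2 i = k ∧ p.2.get (Fin.cast hh.1 i) = b) ↔ i = ⟨(k : ℕ), hk1⟩) := by
        intro i
        constructor
        · rintro ⟨h2, h1⟩
          have hv : (i : ℕ) = (k : ℕ) := by
            have := congrArg (fun x : Fin r => (x : ℕ)) h2
            simpa using this
          exact Fin.ext hv
        · rintro rfl
          refine ⟨Fin.ext (by simp), ?_⟩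
          have : Fin.cast hh.1 (⟨(k : ℕ), hk1⟩ : Fin p.1.length) = ⟨(k : ℕ), hk⟩ :=
            Fin.ext (by simp)
          rw [this]
          exact hb
      rw [Finset.sum_congr rfl (fun i _ => if_congr (hiff i) rfl rfl)]
      simp
    · rw [if_neg hb]
      refine Finset.sum_eq_zero fun i _ => ?_
      rw [if_neg]
      rintro ⟨h2, h1⟩
      have hv : (i : ℕ) = (k : ℕ) := by
        have := congrArg (fun x : Fin r => (x : ℕ)) h2
        simpa using this
      apply hb
      rw [← h1]
      congr 1
      exact Fin.ext (by simp [hv])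
  · rw [dif_neg hk]
    refine Finset.sum_eq_zero fun i _ => ?_
    rw [if_neg]
    rintro ⟨h2, h1⟩
    have hv : (i : ℕ) = (k : ℕ) := by
      have := congrArg (fun x : Fin r => (x : ℕ)) h2
      simpa using this
    apply hk
    rw [← hv]
    exact hh.1 ▸ i.isLt

theorem precRow_refl {m n : ℕ} (p : Brow m n) : precRow p p :=
  ⟨le_rfl, le_rfl, fun i => le_rfl, fun i => le_rfl⟩

instance precRow_trans {m n : ℕ} : IsTrans (Brow m n) precRow := by
  constructor
  rintro p q w ⟨hq1, hq2, hq3, hq4⟩ ⟨hw1, hw2, hw3, hw4⟩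
  refine ⟨le_trans hw1 hq1, le_trans hw2 hq2, fun i => ?_, fun i => ?_⟩
  · exact le_trans (hq3 ⟨(i : ℕ), lt_of_lt_of_le i.isLt hw1⟩) (hw3 i)
  · exact le_trans (hq4 ⟨(i : ℕ), lt_of_lt_of_le i.isLt hw2⟩) (hw4 i)

theorem chain_head_prec {m n : ℕ} (p : Brow m n) (Δ : Bitab m n)
    (hc : (p :: Δ).Chain' precRow) : ∀ p' ∈ p :: Δ, precRow p p' := by
  intro p' hp'
  rcases List.mem_cons.mp hp' with rfl | hmem
  · exact precRow_refl p'
  · exact (List.pairwise_cons.mp (List.isChain_iff_pairwise.mp hc)).1 p' hmem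

theorem tabMark_y_mem {m n r : ℕ} (Δ : Bitab m n)
    (hΔ : ∀ p ∈ Δ, validRow p ∧ p.1.length ≤ r)
    (a : Fin m) (k : Fin r) (hne : tabMark m n r Δ (yv a k) ≠ 0) :
    ∃ p' ∈ Δ, ∃ hk : (k : ℕ) < p'.1.length, p'.1.get ⟨(k : ℕ), hk⟩ = a := by
  classical
  by_contra hcon
  push_neg at hcon
  apply hne
  rw [tabMark_apply]
  refine List.sum_eq_zero ?_
  intro x hx
  rw [List.mem_map] at hx
  obtain ⟨p', hp', rfl⟩ := hx
  rw [rowMark_apply_y p' ⟨(hΔ p' hp').1.1, (hΔ p' hp').2⟩]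
  by_cases hk : (k : ℕ) < p'.1.length
  · rw [dif_pos hk, if_neg (hcon p' hp' hk)]
  · rw [dif_neg hk]

theorem tabMark_z_mem {m n r : ℕ} (Δ : Bitab m n)
    (hΔ : ∀ p ∈ Δ, validRow p ∧ p.1.length ≤ r)
    (k : Fin r) (b : Fin n) (hne : tabMark m n r Δ (zv k b) ≠ 0) :
    ∃ p' ∈ Δ, ∃ hk : (k : ℕ) < p'.2.length, p'.2.get ⟨(k : ℕ), hk⟩ = b := by
  classical
  by_contra hcon
  push_neg at hcon
  apply hne
  rw [tabMark_apply]
  refine List.sum_eq_zero ?_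
  intro x hx
  rw [List.mem_map] at hx
  obtain ⟨p', hp', rfl⟩ := hx
  rw [rowMark_apply_z p' ⟨(hΔ p' hp').1.1, (hΔ p' hp').2⟩]
  by_cases hk : (k : ℕ) < p'.2.length
  · rw [dif_pos hk, if_neg (hcon p' hp' hk)]
  · rw [dif_neg hk]

theorem tabMark_y_pos {m n r : ℕ} (Δ : Bitab m n)
    (hΔ : ∀ p ∈ Δ, validRow p ∧ p.1.length ≤ r)
    (p' : Brow m n) (hp' : p' ∈ Δ) (k : Fin r) (hk : (k : ℕ) < p'.1.length) :
    tabMark m n r Δ (yv (p'.1.get ⟨(k : ℕ), hk⟩) k) ≠ 0 := by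
  intro hcon
  rw [tabMark_apply, List.sum_eq_zero_iff] at hcon
  have := hcon _ (List.mem_map_of_mem hp')
  rw [rowMark_apply_y p' ⟨(hΔ p' hp').1.1, (hΔ p' hp').2⟩, dif_pos hk, if_pos rfl] at this
  exact one_ne_zero this

theorem tabMark_z_pos {m n r : ℕ} (Δ : Bitab m n)
    (hΔ : ∀ p ∈ Δ, validRow p ∧ p.1.length ≤ r)
    (p' : Brow m n) (hp' : p' ∈ Δ) (k : Fin r) (hk : (k : ℕ) < p'.2.length) :
    tabMark m n r Δ (zv k (p'.2.get ⟨(k : ℕ), hk⟩)) ≠ 0 := by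
  intro hcon
  rw [tabMark_apply, List.sum_eq_zero_iff] at hcon
  have := hcon _ (List.mem_map_of_mem hp')
  rw [rowMark_apply_z p' ⟨(hΔ p' hp').1.1, (hΔ p' hp').2⟩, dif_pos hk, if_pos rfl] at this
  exact one_ne_zero this

theorem tabMark_head_ne_zero {m n r : ℕ} (q : Brow m n) (Γ : Bitab m n)
    (hΓ : ∀ p ∈ q :: Γ, validRow p ∧ p.1.length ≤ r) :
    tabMark m n r (q :: Γ) ≠ 0 := by
  have hq := hΓ q (List.mem_cons_self)
  have hlen : 0 < q.1.length := List.length_pos_iff.mpr hq.1.2.2.2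
  have hr : (((⟨0, lt_of_lt_of_le hlen hq.2⟩ : Fin r)) : ℕ) < q.1.length := hlen
  intro hcon
  exact tabMark_y_pos (q :: Γ) hΓ q (List.mem_cons_self) _ hr (by rw [hcon]; rfl)

/-- Key injectivity: a small standard bitableau is determined by its marker. -/
theorem tabMark_inj {m n r : ℕ} : ∀ (Δ Γ : Bitab m n),
    (∀ p ∈ Δ, validRow p ∧ p.1.length ≤ r) → Δ.Chain' precRow →
    (∀ p ∈ Γ, validRow p ∧ p.1.length ≤ r) → Γ.Chain' precRow →
    tabMark m n r Δ = tabMark m n r Γ → Δ = Γ := by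
  intro Δ
  induction Δ with
  | nil =>
    intro Γ _ _ hΓ _ heq
    cases Γ with
    | nil => rfl
    | cons q Γ' => exact absurd heq.symm (tabMark_head_ne_zero q Γ' hΓ)
  | cons p Δ' ih =>
    intro Γ hΔ hΔc hΓ hΓc heq
    cases Γ with
    | nil => exact absurd heq (tabMark_head_ne_zero p Δ' hΔ)
    | cons q Γ' =>
      have hp := hΔ p (List.mem_cons_self)
      have hq := hΓ q (List.mem_cons_self)
      -- lengths of the first lists agree
      have hlen : p.1.length = q.1.length := by
        by_contra hnel
        rcases Nat.lt_or_ge p.1.length q.1.length with hlt | hge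
        · have hkr : p.1.length < r := lt_of_lt_of_le hlt hq.2
          have hpos := tabMark_y_pos (q :: Γ') hΓ q (List.mem_cons_self)
            ⟨p.1.length, hkr⟩ hlt
          rw [← heq] at hpos
          obtain ⟨p', hp', hk', _⟩ := tabMark_y_mem (p :: Δ') hΔ _ _ hpos
          have hle : p'.1.length ≤ p.1.length :=
            (chain_head_prec p Δ' hΔc p' hp').1
          simp only at hk'
          omega
        · have hgt : q.1.length < p.1.length := lt_of_le_of_ne hge (fun hh => hnel hh.symm)
          have hkr : q.1.length < r := lt_of_lt_of_le hgt hp.2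
          have hpos := tabMark_y_pos (p :: Δ') hΔ p (List.mem_cons_self)
            ⟨q.1.length, hkr⟩ hgt
          rw [heq] at hpos
          obtain ⟨p', hp', hk', _⟩ := tabMark_y_mem (q :: Γ') hΓ _ _ hpos
          have hle : p'.1.length ≤ q.1.length :=
            (chain_head_prec q Γ' hΓc p' hp').1
          simp only at hk'
          omega
      -- entries of the first lists agree
      have hget1 : ∀ (k : ℕ) (hk : k < p.1.length) (hk' : k < q.1.length),
          p.1.get ⟨k, hk⟩ = q.1.get ⟨k, hk'⟩ := by
        intro k hk hk'
        have hkr : k < r := lt_of_lt_of_le hk hp.2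
        have h1 : q.1.get ⟨k, hk'⟩ ≤ p.1.get ⟨k, hk⟩ := by
          have hpos := tabMark_y_pos (p :: Δ') hΔ p (List.mem_cons_self) ⟨k, hkr⟩ hk
          rw [heq] at hpos
          obtain ⟨p', hp', hkk, hgg⟩ := tabMark_y_mem (q :: Γ') hΓ _ _ hpos
          obtain ⟨hb1, hb2, hb3, hb4⟩ := chain_head_prec q Γ' hΓc p' hp'
          have := hb3 ⟨k, hkk⟩
          rw [hgg] at this
          exact this
        have h2 : p.1.get ⟨k, hk⟩ ≤ q.1.get ⟨k, hk'⟩ := by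
          have hpos := tabMark_y_pos (q :: Γ') hΓ q (List.mem_cons_self) ⟨k, hkr⟩ hk'
          rw [← heq] at hpos
          obtain ⟨p', hp', hkk, hgg⟩ := tabMark_y_mem (p :: Δ') hΔ _ _ hpos
          obtain ⟨hb1, hb2, hb3, hb4⟩ := chain_head_prec p Δ' hΔc p' hp'
          have := hb3 ⟨k, hkk⟩
          rw [hgg] at this
          exact this
        exact le_antisymm h2 h1
      -- lengths and entries of the second lists agree
      have hlen2 : p.2.length = q.2.length := by
        rw [← hp.1.1, ← hq.1.1, hlen]
      have hget2 : ∀ (k : ℕ) (hk : k < p.2.length) (hk' : k < q.2.length),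
          p.2.get ⟨k, hk⟩ = q.2.get ⟨k, hk'⟩ := by
        intro k hk hk'
        have hkr : k < r := lt_of_lt_of_le hk (hp.1.1 ▸ hp.2)
        have h1 : q.2.get ⟨k, hk'⟩ ≤ p.2.get ⟨k, hk⟩ := by
          have hpos := tabMark_z_pos (p :: Δ') hΔ p (List.mem_cons_self) ⟨k, hkr⟩ hk
          rw [heq] at hpos
          obtain ⟨p', hp', hkk, hgg⟩ := tabMark_z_mem (q :: Γ') hΓ _ _ hpos
          obtain ⟨hb1, hb2, hb3, hb4⟩ := chain_head_prec q Γ' hΓc p' hp'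
          have := hb4 ⟨k, hkk⟩
          rw [hgg] at this
          exact this
        have h2 : p.2.get ⟨k, hk⟩ ≤ q.2.get ⟨k, hk'⟩ := by
          have hpos := tabMark_z_pos (q :: Γ') hΓ q (List.mem_cons_self) ⟨k, hkr⟩ hk'
          rw [← heq] at hpos
          obtain ⟨p', hp', hkk, hgg⟩ := tabMark_z_mem (p :: Δ') hΔ _ _ hpos
          obtain ⟨hb1, hb2, hb3, hb4⟩ := chain_head_prec p Δ' hΔc p' hp'
          have := hb4 ⟨k, hkk⟩
          rw [hgg] at this
          exact this
        exact le_antisymm h2 h1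
      have hpq : p = q := by
        have h1 : p.1 = q.1 := List.ext_get hlen (fun i hi hi' => hget1 i hi hi')
        have h2 : p.2 = q.2 := List.ext_get hlen2 (fun i hi hi' => hget2 i hi hi')
        exact Prod.ext h1 h2
      subst hpq
      have htails : tabMark m n r Δ' = tabMark m n r Γ' := by
        rw [tabMark_cons, tabMark_cons] at heq
        exact add_left_cancel heq
      have := ih Γ' (fun p' h => hΔ p' (List.mem_cons_of_mem _ h)) hΔc.tail
        (fun p' h => hΓ p' (List.mem_cons_of_mem _ h)) hΓc.tail htails
      rw [this]


/-! ### Images of bitableaux, vanishing on the ideal, Laplace expansion -/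

theorem phi_bitab_main {K : Type*} [Field K] {m n r : ℕ} (Δ : Bitab m n)
    (hΔ : ∀ p ∈ Δ, validRow p ∧ p.1.length ≤ r) :
    MvPolynomial.coeff (tabMark m n r Δ) (phi K m n r (bitabPoly K Δ)) = 1 ∧
    ∀ d ∈ (phi K m n r (bitabPoly K Δ)).support, toLex d ≤ toLex (tabMark m n r Δ) := by
  induction Δ with
  | nil =>
    have hb : bitabPoly K ([] : Bitab m n) = 1 := by rw [bitabPoly]; rfl
    rw [hb, map_one, tabMark_nil]
    constructor
    · rw [MvPolynomial.coeff_zero_one]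
    · intro d hd
      rw [MvPolynomial.mem_support_iff, MvPolynomial.coeff_one] at hd
      by_cases h0 : (0 : VT m n r →₀ ℕ) = d
      · rw [← h0]
      · rw [if_neg h0] at hd
        exact absurd rfl hd
  | cons p Δ' ih =>
    have hp := hΔ p (List.mem_cons_self)
    have h1 := phi_row_main (K := K) p hp.1 hp.2
    have h2 := ih (fun p' h => hΔ p' (List.mem_cons_of_mem _ h))
    have hb : bitabPoly K (p :: Δ') = rowPoly K p * bitabPoly K Δ' := by
      rw [bitabPoly, bitabPoly, List.map_cons, List.prod_cons]
    rw [hb, map_mul, tabMark_cons]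
    exact coeff_mul_top _ _ _ _ h1.1 h1.2 h2.1 h2.2

theorem phi_span_zero {K : Type*} [Field K] {m n t : ℕ} (ht : 1 ≤ t) (x : MvPolynomial (Fin m × Fin n) K)
    (hx : x ∈ Ideal.span {f | ∃ p : Brow m n, validRow p ∧ p.1.length = t ∧ f = rowPoly K p}) :
    phi K m n (t - 1) x = 0 := by
  refine Submodule.span_induction ?_ ?_ ?_ ?_ hx
  · rintro f ⟨p, hv, hlen, rfl⟩
    exact phi_row_zero p hv.1 (by omega)
  · exact map_zero _
  · intro a b _ _ ha hb
    rw [map_add, ha, hb, add_zero]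
  · intro a b _ hb
    rw [smul_eq_mul, map_mul, hb, mul_zero]

open MvPolynomial in
/-- Laplace expansion: every minor of size `≥ t` lies in the ideal generated by
the `t`-minors. -/
theorem rowPoly_mem_span {K : Type*} [Field K] {m n : ℕ} (t : ℕ) (ht : 1 ≤ t) :
    ∀ (s : ℕ) (p : Brow m n), validRow p → p.1.length = t + s →
      rowPoly K p ∈ Ideal.span
        {f : MvPolynomial (Fin m × Fin n) K |
          ∃ q : Brow m n, validRow q ∧ q.1.length = t ∧ f = rowPoly K q} := by
  intro s
  induction s with
  | zero =>
    intro p hv hl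
    exact Ideal.subset_span ⟨p, hv, by omega, rfl⟩
  | succ s ih =>
    intro p hv hl
    obtain ⟨h, hca, hcb, hne⟩ := hv
    have hN : p.1.length = (t + s) + 1 := by omega
    have hN2 : p.2.length = (t + s) + 1 := by omega
    have key : rowPoly K p = Matrix.det (Matrix.of fun i j : Fin ((t + s) + 1) =>
        (X (p.1.get (Fin.cast hN.symm i), p.2.get (Fin.cast hN2.symm j)) :
          MvPolynomial (Fin m × Fin n) K)) := by
      rw [rowPoly, dif_pos h]
      rw [← Matrix.det_submatrix_equiv_self (finCongr hN.symm)]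
      congr 1
    rw [key, Matrix.det_succ_row_zero]
    refine Ideal.sum_mem _ fun j _ => ?_
    apply Ideal.mul_mem_left
    have hjlt : (j : ℕ) < p.2.length := by omega
    have hlen1 : (p.1.tail).length = t + s := by
      rw [List.length_tail]; omega
    have hlen2 : (p.2.eraseIdx (j : ℕ)).length = t + s := by
      rw [List.length_eraseIdx, if_pos hjlt]; omega
    have hv' : validRow ((p.1.tail, p.2.eraseIdx (j : ℕ)) : Brow m n) := by
      refine ⟨hlen1.trans hlen2.symm, hca.tail, ?_, ?_⟩
      · exact List.isChain_iff_pairwise.mpr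
          (((List.isChain_iff_pairwise.mp hcb).sublist (List.eraseIdx_sublist _ _)))
      · intro hcon
        have : (p.1.tail).length = 0 := by rw [show p.1.tail = ([] : List (Fin m)) from hcon]; rfl
        omega
    have hdet : ((Matrix.of fun i j : Fin ((t + s) + 1) =>
        (X (p.1.get (Fin.cast hN.symm i), p.2.get (Fin.cast hN2.symm j)) :
          MvPolynomial (Fin m × Fin n) K)).submatrix Fin.succ j.succAbove).det
          = rowPoly K ((p.1.tail, p.2.eraseIdx (j : ℕ)) : Brow m n) := by
      rw [rowPoly, dif_pos hv'.1]
      rw [← Matrix.det_submatrix_equiv_self (finCongr hlen1.symm)]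
      congr 1
      refine Matrix.ext fun i i2 => ?_
      simp only [Matrix.submatrix_apply, Matrix.of_apply, finCongr_apply]
      refine congrArg X (Prod.ext ?_ ?_)
      · have hi1 : ((i : ℕ)) < p.1.tail.length := by omega
        have hi2 : ((i : ℕ)) + 1 < p.1.length := by omega
        have hr : p.1.tail.get ⟨(i : ℕ), hi1⟩ = p.1.get ⟨(i : ℕ) + 1, hi2⟩ :=
          List.get_tail p.1 (i : ℕ) hi1 hi2
        show p.1.get (Fin.cast hN.symm i.succ) = p.1.tail.get (Fin.cast hlen1.symm i)
        rw [show (Fin.cast hlen1.symm i : Fin p.1.tail.length) = ⟨(i : ℕ), hi1⟩ from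
          Fin.ext (by simp), hr]
        exact congrArg p.1.get (Fin.ext (by simp))
      · show p.2.get (Fin.cast hN2.symm (j.succAbove i2))
            = (p.2.eraseIdx (j : ℕ)).get (Fin.cast hv'.1 (Fin.cast hlen1.symm i2))
        simp only [List.get_eq_getElem, Fin.coe_cast]
        rw [List.getElem_eraseIdx]
        rcases lt_or_ge ((i2 : ℕ)) ((j : ℕ)) with hlt | hge
        · rw [dif_pos hlt]
          have hsa : Fin.succAbove j i2 = Fin.castSucc i2 :=
            Fin.succAbove_of_castSucc_lt j i2 (by
              rw [Fin.lt_iff_val_lt_val]; simpa using hlt)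
          rw [hsa]
          simp
        · rw [dif_neg (not_lt.mpr hge)]
          have hsa : Fin.succAbove j i2 = Fin.succ i2 :=
            Fin.succAbove_of_le_castSucc j i2 (by
              rw [Fin.le_iff_val_le_val]; simpa using hge)
          rw [hsa]
          simp
    rw [hdet]
    exact ih _ hv' hlen1


/-! ### Assembly lemmas -/

theorem small_coeffs_zero {K : Type*} [Field K] {m n r : ℕ} :
    ∀ (s : Finset (Bitab m n)),
    (∀ Δ ∈ s, Δ.Chain' precRow ∧ ∀ p ∈ Δ, validRow p ∧ p.1.length ≤ r) →
    ∀ (c : Bitab m n → K),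
    (∑ Δ ∈ s, c Δ • phi K m n r (bitabPoly K Δ)) = 0 → ∀ Δ ∈ s, c Δ = 0 := by
  classical
  intro s
  induction s using Finset.strongInduction with
  | _ s ih =>
    intro hgood c hsum Δ hΔ
    have hne : s.Nonempty := ⟨Δ, hΔ⟩
    obtain ⟨Δ₀, hΔ₀mem, hΔ₀max⟩ :=
      Finset.exists_max_image s (fun Δ => toLex (tabMark m n r Δ)) hne
    have hg₀ := hgood Δ₀ hΔ₀mem
    have hmain₀ := phi_bitab_main (K := K) Δ₀ hg₀.2
    have hc₀ : c Δ₀ = 0 := by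
      have hc := congrArg (MvPolynomial.coeff (tabMark m n r Δ₀)) hsum
      rw [MvPolynomial.coeff_zero, MvPolynomial.coeff_sum] at hc
      rw [Finset.sum_eq_single_of_mem Δ₀ hΔ₀mem] at hc
      · rw [MvPolynomial.coeff_smul, hmain₀.1, smul_eq_mul, mul_one] at hc
        exact hc
      · intro Γ hΓ hΓne
        rw [MvPolynomial.coeff_smul]
        have hgΓ := hgood Γ hΓ
        have hmainΓ := phi_bitab_main (K := K) Γ hgΓ.2
        have hcoeff0 : MvPolynomial.coeff (tabMark m n r Δ₀) (phi K m n r (bitabPoly K Γ)) = 0 := by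
          by_contra hcon
          have hmem : tabMark m n r Δ₀ ∈ (phi K m n r (bitabPoly K Γ)).support :=
            MvPolynomial.mem_support_iff.mpr hcon
          have h1 : toLex (tabMark m n r Δ₀) ≤ toLex (tabMark m n r Γ) := hmainΓ.2 _ hmem
          have h2 : toLex (tabMark m n r Γ) ≤ toLex (tabMark m n r Δ₀) := hΔ₀max Γ hΓ
          have heq : tabMark m n r Γ = tabMark m n r Δ₀ := (le_antisymm h2 h1 :)
          exact hΓne (tabMark_inj Γ Δ₀ hgΓ.2 hgΓ.1 hg₀.2 hg₀.1 heq)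
        rw [hcoeff0, smul_zero]
    have hrest : ∑ Γ ∈ s.erase Δ₀, c Γ • phi K m n r (bitabPoly K Γ) = 0 := by
      have hh : ∑ Γ ∈ s, c Γ • phi K m n r (bitabPoly K Γ)
          = c Δ₀ • phi K m n r (bitabPoly K Δ₀)
            + ∑ Γ ∈ s.erase Δ₀, c Γ • phi K m n r (bitabPoly K Γ) :=
        (Finset.add_sum_erase s _ hΔ₀mem).symm
      rw [hsum, hc₀, zero_smul, zero_add] at hh
      exact hh.symm
    rcases eq_or_ne Δ Δ₀ with rfl | hne'
    · exact hc₀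
    · exact ih (s.erase Δ₀) (Finset.erase_ssubset hΔ₀mem)
        (fun Γ hΓ => hgood Γ (Finset.mem_of_mem_erase hΓ)) c hrest Δ
        (Finset.mem_erase.mpr ⟨hne', hΔ⟩)

theorem small_of_not_head {m n t : ℕ} (Δ : Bitab m n) (hstd : isStd Δ)
    (hnp : ¬ ∃ p ∈ Δ.head?, t ≤ p.1.length) :
    ∀ p ∈ Δ, validRow p ∧ p.1.length ≤ t - 1 := by
  intro p hp
  refine ⟨hstd.1.1 p hp, ?_⟩
  cases Δ with
  | nil => exact absurd hp List.not_mem_nil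
  | cons q Δ' =>
    have hq : q.1.length < t := by
      by_contra hge
      exact hnp ⟨q, by simp, by omega⟩
    have hchain := hstd.1.2
    rw [List.map_cons] at hchain
    have hpair := List.isChain_iff_pairwise.mp hchain
    rcases List.mem_cons.mp hp with rfl | hmem
    · omega
    · have := (List.pairwise_cons.mp hpair).1 (p.1.length) (List.mem_map_of_mem hmem)
      omega

theorem bitab_head_mem {K : Type*} [Field K] {m n t : ℕ} (ht : 1 ≤ t) (Δ : Bitab m n)
    (hstd : isStd Δ) (hh : ∃ p ∈ Δ.head?, t ≤ p.1.length) :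
    bitabPoly K Δ ∈ Ideal.span
      {f : MvPolynomial (Fin m × Fin n) K |
        ∃ q : Brow m n, validRow q ∧ q.1.length = t ∧ f = rowPoly K q} := by
  cases Δ with
  | nil => simp at hh
  | cons p Δ' =>
    obtain ⟨p', hp', hlen⟩ := hh
    have hpp : p = p' := by simpa using hp'
    subst hpp
    have hb : bitabPoly K (p :: Δ') = rowPoly K p * bitabPoly K Δ' := by
      rw [bitabPoly, bitabPoly, List.map_cons, List.prod_cons]
    rw [hb]
    exact Ideal.mul_mem_right _ _
      (rowPoly_mem_span t ht (p.1.length - t) p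
        (hstd.1.1 p (List.mem_cons_self)) (by omega))

end ItAux



/-- Assuming the straightening law (hypothesis `B`): the standard bitableaux
`Σ = δ_1⋯δ_w` with `|δ_1| ≥ t` form a `K`-basis of the determinantal ideal
`I_t` generated by the `t`-minors. -/
theorem It_standard_basis (m n t : ℕ) (ht1 : 1 ≤ t) (ht2 : t ≤ min m n)
    (B : Module.Basis {Δ : Bitab m n // isStd Δ} K (MvPolynomial (Fin m × Fin n) K))
    (hB : ∀ T, B T = bitabPoly K T.val) :
    ((Ideal.span {f | ∃ p : Brow m n, validRow p ∧ p.1.length = t ∧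
        f = rowPoly K p} : Ideal (MvPolynomial (Fin m × Fin n) K)) :
      Set (MvPolynomial (Fin m × Fin n) K)) =
      ↑(Submodule.span K {f | ∃ Δ : Bitab m n, isStd Δ ∧
        (∃ p ∈ Δ.head?, t ≤ p.1.length) ∧ f = bitabPoly K Δ}) ∧
    LinearIndependent K
      (fun T : {Δ : Bitab m n // isStd Δ ∧ ∃ p ∈ Δ.head?, t ≤ p.1.length} =>
        bitabPoly K T.val) := by
  classical
  constructor
  · ext x
    simp only [SetLike.mem_coe]
    constructor
    · -- I_t ⊆ span of standard bitableaux with big head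
      intro hx
      set c := B.repr x with hcdef
      have hx' : ∑ T ∈ c.support, c T • bitabPoly K T.val = x := by
        have h0 : ∑ T ∈ c.support, c T • B T = x := by
          conv_rhs => rw [← B.linearCombination_repr x]
          rfl
        rw [← h0]
        exact Finset.sum_congr rfl fun T _ => by rw [hB]
      set P : {Δ : Bitab m n // isStd Δ} → Prop :=
        fun T => ∃ p ∈ T.val.head?, t ≤ p.1.length with hPdef
      set x₁ := ∑ T ∈ c.support.filter P, c T • bitabPoly K T.val with hx₁
      set x₂ := ∑ T ∈ c.support.filter (fun T => ¬ P T), c T • bitabPoly K T.val with hx₂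
      have hxsum : x₁ + x₂ = x := by
        rw [hx₁, hx₂, Finset.sum_filter_add_sum_filter_not, hx']
      have hx₁I : x₁ ∈ Submodule.restrictScalars K
          (Ideal.span {f | ∃ p : Brow m n, validRow p ∧ p.1.length = t ∧ f = rowPoly K p}) := by
        refine Submodule.sum_mem _ fun T hT => Submodule.smul_mem _ _ ?_
        exact ItAux.bitab_head_mem ht1 T.val T.2 (Finset.mem_filter.mp hT).2
      have hx₁S : x₁ ∈ Submodule.span K {f | ∃ Δ : Bitab m n, isStd Δ ∧
          (∃ p ∈ Δ.head?, t ≤ p.1.length) ∧ f = bitabPoly K Δ} := by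
        refine Submodule.sum_mem _ fun T hT => Submodule.smul_mem _ _ ?_
        exact Submodule.subset_span ⟨T.val, T.2, (Finset.mem_filter.mp hT).2, rfl⟩
      have hx₂I : x₂ ∈ Ideal.span {f | ∃ p : Brow m n, validRow p ∧ p.1.length = t ∧ f = rowPoly K p} := by
        have h2 : x₂ = x - x₁ := by rw [← hxsum]; ring
        rw [h2]
        exact Submodule.sub_mem _ hx hx₁I
      have hφ : ItAux.phi K m n (t - 1) x₂ = 0 := ItAux.phi_span_zero ht1 x₂ hx₂I
      have hφsum : ∑ T ∈ c.support.filter (fun T => ¬ P T),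
          c T • ItAux.phi K m n (t - 1) (bitabPoly K T.val) = 0 := by
        rw [← hφ, hx₂, map_sum]
        exact Finset.sum_congr rfl fun T _ => by rw [map_smul]
      set sv := (c.support.filter (fun T => ¬ P T)).image Subtype.val with hsv
      set c' : Bitab m n → K := fun Δ => if h : isStd Δ then c ⟨Δ, h⟩ else 0 with hc'
      have hvalinj : ∀ x ∈ c.support.filter (fun T => ¬ P T),
          ∀ y ∈ c.support.filter (fun T => ¬ P T), x.val = y.val → x = y :=
        fun a _ b _ hab => Subtype.ext hab
      have hcc : ∀ T : {Δ : Bitab m n // isStd Δ}, c' T.val = c T := by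
        intro T
        simp only [hc']
        rw [dif_pos T.2]
      have hsum' : ∑ Δ ∈ sv, c' Δ • ItAux.phi K m n (t - 1) (bitabPoly K Δ) = 0 := by
        rw [hsv, Finset.sum_image hvalinj]
        rw [← hφsum]
        exact Finset.sum_congr rfl fun T _ => by rw [hcc]
      have hzero : ∀ Δ ∈ sv, c' Δ = 0 := by
        refine ItAux.small_coeffs_zero sv ?_ c' hsum'
        intro Δ hΔ
        obtain ⟨T, hT, rfl⟩ := Finset.mem_image.mp hΔ
        exact ⟨T.2.2, ItAux.small_of_not_head T.val T.2 (Finset.mem_filter.mp hT).2⟩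
      have hx₂0 : x₂ = 0 := by
        rw [hx₂]
        refine Finset.sum_eq_zero fun T hT => ?_
        have : c' T.val = 0 := hzero T.val (Finset.mem_image_of_mem _ hT)
        rw [hcc] at this
        rw [this, zero_smul]
      rw [← hxsum, hx₂0, add_zero]
      exact hx₁S
    · -- span ⊆ I_t
      intro hx
      have hle : Submodule.span K {f | ∃ Δ : Bitab m n, isStd Δ ∧
          (∃ p ∈ Δ.head?, t ≤ p.1.length) ∧ f = bitabPoly K Δ}
          ≤ Submodule.restrictScalars K
            (Ideal.span {f | ∃ p : Brow m n, validRow p ∧ p.1.length = t ∧ f = rowPoly K p}) := by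
        rw [Submodule.span_le]
        rintro f ⟨Δ, hstd, hhead, rfl⟩
        exact ItAux.bitab_head_mem ht1 Δ hstd hhead
      exact hle hx
  · -- linear independence
    have h1 := B.linearIndependent
    have hinj : Function.Injective
        (fun T : {Δ : Bitab m n // isStd Δ ∧ ∃ p ∈ Δ.head?, t ≤ p.1.length} =>
          (⟨T.val, T.2.1⟩ : {Δ : Bitab m n // isStd Δ})) := by
      intro T1 T2 h12
      apply Subtype.ext
      exact congrArg (fun u : {Δ : Bitab m n // isStd Δ} => u.val) h12
    have h2 := h1.comp _ hinj
    have h3 : (fun T : {Δ : Bitab m n // isStd Δ ∧ ∃ p ∈ Δ.head?, t ≤ p.1.length} =>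
        bitabPoly K T.val)
        = (⇑B ∘ fun T : {Δ : Bitab m n // isStd Δ ∧ ∃ p ∈ Δ.head?, t ≤ p.1.length} =>
            (⟨T.val, T.2.1⟩ : {Δ : Bitab m n // isStd Δ})) := by
      funext T
      simp only [Function.comp_apply]
      exact (hB ⟨T.val, T.2.1⟩).symm
    rw [h3]
    exact h2
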